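/- arXiv:2006.01420 — 2 statements merged into one kernel-verified Lean document; each statement's English description precedes it below -/
import Mathlib

section
/- (Proposition 2.) Under (A1) and (A2), the sequence u_0 := ψ_2, u_n := T u_{n−1} (n ≥ 1) is pointwise nondecreasing, there exists u* ∈ B_W(S) with u*(i) = lim_{n→∞} u_n(i) for all i ∈ S, and u* is a fixed point of T: T u*(i) = u*(i) for all i ∈ S. -/
open MeasureTheory Filter Topology

noncomputable section

variable {U V : Type}

/-- Integrated reward rate `r̃(i,μ,ν)`. -/
def rT [MeasurableSpace U] [MeasurableSpace V] (r : ℕ → U → V → ℝ) (i : ℕ)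
    (μ : ProbabilityMeasure U) (ν : ProbabilityMeasure V) : ℝ :=
  ∫ b, (∫ a, r i a b ∂(μ : Measure U)) ∂(ν : Measure V)

/-- Integrated transition rate `q̃(j|i,μ,ν)`. -/
def qT [MeasurableSpace U] [MeasurableSpace V] (q : ℕ → ℕ → U → V → ℝ) (i j : ℕ)
    (μ : ProbabilityMeasure U) (ν : ProbabilityMeasure V) : ℝ :=
  ∫ b, (∫ a, q i j a b ∂(μ : Measure U)) ∂(ν : Measure V)

/-- `p̃(j|i,μ,ν) = q̃(j|i,μ,ν)/(q(i)+1) + δ_{ij}`. -/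
def pT [MeasurableSpace U] [MeasurableSpace V] (q : ℕ → ℕ → U → V → ℝ) (qb : ℕ → ℝ)
    (i j : ℕ) (μ : ProbabilityMeasure U) (ν : ProbabilityMeasure V) : ℝ :=
  qT q i j μ ν / (qb i + 1) + (if i = j then (1 : ℝ) else 0)

/-- `H_α(i,φ)`. -/
def Hop [MeasurableSpace U] [MeasurableSpace V] (q : ℕ → ℕ → U → V → ℝ)
    (r : ℕ → U → V → ℝ) (φ : ℕ → ℝ) (i : ℕ) : ℝ :=
  ⨅ μ : ProbabilityMeasure U, ⨆ ν : ProbabilityMeasure V,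
    (rT r i μ ν + ∑' j, qT q i j μ ν * φ j)

/-- `I_α(i,φ)`. -/
def Iop [MeasurableSpace U] [MeasurableSpace V] (q : ℕ → ℕ → U → V → ℝ)
    (r : ℕ → U → V → ℝ) (qb : ℕ → ℝ) (α : ℝ) (φ : ℕ → ℝ) (i : ℕ) : ℝ :=
  ⨅ μ : ProbabilityMeasure U, ⨆ ν : ProbabilityMeasure V,
    (rT r i μ ν / (α + qb i + 1) +
      ((qb i + 1) / (α + qb i + 1)) * ∑' j, pT q qb i j μ ν * φ j)

/-- The operator `T`. -/
def Tmap [MeasurableSpace U] [MeasurableSpace V] (q : ℕ → ℕ → U → V → ℝ)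
    (r : ℕ → U → V → ℝ) (qb : ℕ → ℝ) (α : ℝ) (ψ₁ ψ₂ : ℕ → ℝ)
    (φ : ℕ → ℝ) (i : ℕ) : ℝ :=
  min (max (Iop q r qb α φ i) (ψ₂ i)) (ψ₁ i)

/-- The space `B_W(S)` of nonnegative functions with finite weighted sup-norm. -/
def BW (W : ℕ → ℝ) : Set (ℕ → ℝ) :=
  {f | (∀ i, 0 ≤ f i) ∧ BddAbove (Set.range fun i => f i / W i)}

/-- The weighted sup-norm `‖f‖_W`. -/
def normW (W : ℕ → ℝ) (f : ℕ → ℝ) : ℝ := ⨆ i, f i / W i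

/-- Basic properties of the transition rates: nonnegativity off the diagonal,
conservativeness and stability (`qb i` is the least upper bound `q(i)`). -/
structure RateHyps (q : ℕ → ℕ → U → V → ℝ) (qb : ℕ → ℝ) : Prop where
  off_nonneg : ∀ i j a b, j ≠ i → 0 ≤ q i j a b
  summable : ∀ i a b, Summable fun j => q i j a b
  conservative : ∀ i a b, ∑' j, q i j a b = 0
  stable : ∀ i, IsLUB (Set.range fun ab : U × V =>
    ∑' j, if j = i then (0 : ℝ) else q i j ab.1 ab.2) (qb i)

/-- Assumption (A1) (with `w 0, …, w (N-1)` playing the role of `w_1, …, w_N`,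
and `W = w_1 + ⋯ + w_N`). -/
structure A1Hyps (q : ℕ → ℕ → U → V → ℝ) (qb : ℕ → ℝ) (N : ℕ) (w : ℕ → ℕ → ℝ)
    (c : ℝ) (W : ℕ → ℝ) : Prop where
  N_pos : 0 < N
  c_pos : 0 < c
  w_nonneg : ∀ n i, 0 ≤ w n i
  w_summable : ∀ n, n < N → ∀ i a b, Summable fun j => q i j a b * w n j
  w_rec : ∀ n, n + 1 < N → ∀ i a b, ∑' j, q i j a b * w n j ≤ w (n + 1) i
  w_last : ∀ i a b, ∑' j, q i j a b * w (N - 1) j ≤ 0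
  qb_le : ∀ i, qb i ≤ c * W i
  W_def : ∀ i, W i = ∑ n ∈ Finset.range N, w n i
  W_pos : ∀ i, 0 < W i

/-- Assumption (A2), parts (ii)-(iv) concerning `r` and `q`
(compactness of `U` and `V` is imposed through instance arguments). -/
structure A2Hyps [TopologicalSpace U] [TopologicalSpace V] (q : ℕ → ℕ → U → V → ℝ)
    (r : ℕ → U → V → ℝ) (W : ℕ → ℝ) (M : ℝ) : Prop where
  r_nonneg : ∀ i a b, 0 ≤ r i a b
  r_cont : ∀ i, Continuous fun ab : U × V => r i ab.1 ab.2
  q_cont : ∀ i j, Continuous fun ab : U × V => q i j ab.1 ab.2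
  qW_cont : ∀ i, Continuous fun ab : U × V => ∑' j, q i j ab.1 ab.2 * W j
  r_le : ∀ i a b, r i a b ≤ M * W i

/-- Assumption (A2), part (iv) concerning the stopped pay-off functions. -/
structure PsiHyps (ψ₁ ψ₂ : ℕ → ℝ) (W : ℕ → ℝ) (M : ℝ) : Prop where
  ψ₂_nonneg : ∀ i, 0 ≤ ψ₂ i
  ψ₁_le : ∀ i, ψ₁ i ≤ M * W i
  ψ₂_lt_ψ₁ : ∀ i, ψ₂ i < ψ₁ i

end


set_option linter.unusedSectionVars false
set_option maxHeartbeats 1000000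

noncomputable section

namespace ST17

variable {U V : Type} [MetricSpace U] [CompactSpace U] [Nonempty U]
    [MeasurableSpace U] [BorelSpace U]
    [MetricSpace V] [CompactSpace V] [Nonempty V]
    [MeasurableSpace V] [BorelSpace V]

/-- Iterated integral. -/
def II (μ : Measure U) (ν : Measure V) (f : U → V → ℝ) : ℝ := ∫ b, (∫ a, f a b ∂μ) ∂ν

section IIlemmas

variable {μ : Measure U} {ν : Measure V} [IsProbabilityMeasure μ] [IsProbabilityMeasure ν]
variable {f g : U → V → ℝ}

lemma bound2 (hf : Continuous fun p : U × V => f p.1 p.2) : ∃ C, ∀ a b, ‖f a b‖ ≤ C := by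
  obtain ⟨x, -, hx⟩ := isCompact_univ.exists_isMaxOn Set.univ_nonempty hf.norm.continuousOn
  exact ⟨‖f x.1 x.2‖, fun a b => hx (Set.mem_univ (a, b))⟩

lemma contA (hf : Continuous fun p : U × V => f p.1 p.2) (b : V) :
    Continuous fun a => f a b := hf.comp (continuous_id.prodMk continuous_const)

lemma intA (hf : Continuous fun p : U × V => f p.1 p.2) (b : V) :
    Integrable (fun a => f a b) μ := by
  obtain ⟨C, hC⟩ := bound2 hf
  exact (integrable_const C).mono' (contA hf b).aestronglyMeasurable
    (Eventually.of_forall fun a => hC a b)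

lemma contB (hf : Continuous fun p : U × V => f p.1 p.2) :
    Continuous fun b => ∫ a, f a b ∂μ := by
  obtain ⟨C, hC⟩ := bound2 hf
  exact continuous_of_dominated (fun b => (contA hf b).aestronglyMeasurable)
    (fun b => Eventually.of_forall fun a => hC a b) (integrable_const C)
    (Eventually.of_forall fun a => hf.comp (continuous_const.prodMk continuous_id))

lemma intB (hf : Continuous fun p : U × V => f p.1 p.2) :
    Integrable (fun b => ∫ a, f a b ∂μ) ν := by
  obtain ⟨C, hC⟩ := bound2 hf
  refine (integrable_const C).mono' (contB hf).aestronglyMeasurable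
    (Eventually.of_forall fun b => ?_)
  calc ‖∫ a, f a b ∂μ‖ ≤ ∫ a, ‖f a b‖ ∂μ := norm_integral_le_integral_norm _
    _ ≤ ∫ _ : U, C ∂μ := integral_mono (intA hf b).norm (integrable_const C) fun a => hC a b
    _ = C := by simp

lemma II_nonneg (h : ∀ a b, 0 ≤ f a b) : 0 ≤ II μ ν f :=
  integral_nonneg fun b => integral_nonneg fun a => h a b

lemma II_mono (hf : Continuous fun p : U × V => f p.1 p.2)
    (hg : Continuous fun p : U × V => g p.1 p.2) (h : ∀ a b, f a b ≤ g a b) :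
    II μ ν f ≤ II μ ν g :=
  integral_mono (intB hf) (intB hg) fun b =>
    integral_mono (intA hf b) (intA hg b) fun a => h a b

lemma II_const (c : ℝ) : II μ ν (fun _ _ => c) = c := by simp [II]

lemma II_le_const {c : ℝ} (hf : Continuous fun p : U × V => f p.1 p.2)
    (h : ∀ a b, f a b ≤ c) : II μ ν f ≤ c :=
  (II_mono hf continuous_const h).trans_eq (II_const c)

lemma II_add (hf : Continuous fun p : U × V => f p.1 p.2)
    (hg : Continuous fun p : U × V => g p.1 p.2) :
    II μ ν (fun a b => f a b + g a b) = II μ ν f + II μ ν g := by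
  unfold II
  have h1 : ∀ b, ∫ a, (f a b + g a b) ∂μ = (∫ a, f a b ∂μ) + ∫ a, g a b ∂μ := fun b =>
    integral_add (intA hf b) (intA hg b)
  simp_rw [h1]
  exact integral_add (intB hf) (intB hg)

lemma II_smul (c : ℝ) : II μ ν (fun a b => c * f a b) = c * II μ ν f := by
  simp [II, integral_const_mul]

lemma II_div (c : ℝ) : II μ ν (fun a b => f a b / c) = II μ ν f / c := by
  simp only [div_eq_mul_inv, mul_comm _ c⁻¹]
  exact II_smul c⁻¹

lemma II_sum (s : Finset ℕ) (h : ℕ → U → V → ℝ)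
    (hh : ∀ j, Continuous fun p : U × V => h j p.1 p.2) :
    II μ ν (fun a b => ∑ j ∈ s, h j a b) = ∑ j ∈ s, II μ ν (h j) := by
  unfold II
  have h1 : ∀ b, ∫ a, ∑ j ∈ s, h j a b ∂μ = ∑ j ∈ s, ∫ a, h j a b ∂μ := fun b =>
    integral_finset_sum s fun j _ => intA (hh j) b
  simp_rw [h1]
  exact integral_finset_sum s fun j _ => intB (hh j)

end IIlemmas

variable {q : ℕ → ℕ → U → V → ℝ} {r : ℕ → U → V → ℝ} {qb : ℕ → ℝ}
    {N : ℕ} {w : ℕ → ℕ → ℝ} {c : ℝ} {W : ℕ → ℝ} {M : ℝ} {α : ℝ}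

section rate

variable (hrate : RateHyps q qb)
include hrate

lemma offdiag_nonneg (i : ℕ) (a : U) (b : V) (j : ℕ) :
    0 ≤ if j = i then (0 : ℝ) else q i j a b := by
  split_ifs with h
  · exact le_refl 0
  · exact hrate.off_nonneg i j a b h

lemma offdiag_le (i : ℕ) (a : U) (b : V) :
    ∑' j, (if j = i then (0 : ℝ) else q i j a b) ≤ qb i :=
  (hrate.stable i).1 ⟨(a, b), rfl⟩

lemma qb_nonneg (i : ℕ) : 0 ≤ qb i := by
  obtain ⟨a⟩ := ‹Nonempty U›; obtain ⟨b⟩ := ‹Nonempty V›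
  exact le_trans (tsum_nonneg (offdiag_nonneg hrate i a b)) (offdiag_le hrate i a b)

lemma q_diag_ge (i : ℕ) (a : U) (b : V) : -(qb i) ≤ q i i a b := by
  have h0 := hrate.conservative i a b
  have h1 := Summable.tsum_eq_add_tsum_ite (hrate.summable i a b) i
  have h2 := offdiag_le hrate i a b
  rw [h0] at h1
  linarith

lemma qb1_pos (i : ℕ) : (0 : ℝ) < qb i + 1 := by linarith [qb_nonneg hrate i]

end rate


/-- The nonnegative kernel. -/
def Pk (q : ℕ → ℕ → U → V → ℝ) (qb : ℕ → ℝ) (i j : ℕ) (a : U) (b : V) : ℝ :=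
  q i j a b / (qb i + 1) + (if i = j then 1 else 0)

section kernel

variable (hrate : RateHyps q qb) (hA1 : A1Hyps q qb N w c W) (hA2 : A2Hyps q r W M)

include hrate hA2 in
lemma Pk_cont (i j : ℕ) : Continuous fun p : U × V => Pk q qb i j p.1 p.2 :=
  ((hA2.q_cont i j).div_const _).add continuous_const

include hrate in
lemma Pk_nonneg (i j : ℕ) (a : U) (b : V) : 0 ≤ Pk q qb i j a b := by
  unfold Pk
  rcases eq_or_ne i j with h | h
  · subst h
    rw [if_pos rfl]
    have h1 := q_diag_ge hrate i a b
    have h2 := qb1_pos hrate i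
    have : -(1 : ℝ) ≤ q i i a b / (qb i + 1) := by
      rw [neg_le, ← neg_div, div_le_one h2]
      linarith
    linarith
  · rw [if_neg h]
    have h0 := hrate.off_nonneg i j a b (Ne.symm h)
    have h2 := (qb1_pos hrate i).le
    have := div_nonneg h0 h2
    linarith

include hA1 in
lemma summable_qW (i : ℕ) (a : U) (b : V) : Summable fun j => q i j a b * W j := by
  have h1 : (fun j => q i j a b * W j)
      = fun j => ∑ n ∈ Finset.range N, q i j a b * w n j := by
    funext j; rw [hA1.W_def j, Finset.mul_sum]
  rw [h1]
  exact summable_sum fun n hn => hA1.w_summable n (Finset.mem_range.1 hn) i a b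

include hA1 in
lemma tsum_qW_le (i : ℕ) (a : U) (b : V) : ∑' j, q i j a b * W j ≤ W i := by
  have hsum : ∀ n ∈ Finset.range N, Summable fun j => q i j a b * w n j := fun n hn =>
    hA1.w_summable n (Finset.mem_range.1 hn) i a b
  have h1 : ∑' j, q i j a b * W j = ∑ n ∈ Finset.range N, ∑' j, q i j a b * w n j := by
    have h2 : (fun j => q i j a b * W j)
        = fun j => ∑ n ∈ Finset.range N, q i j a b * w n j := by
      funext j; rw [hA1.W_def j, Finset.mul_sum]
    rw [h2]
    exact Summable.tsum_finsetSum hsum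
  rw [h1]
  have key : ∀ n ∈ Finset.range N, ∑' j, q i j a b * w n j
      ≤ (if n + 1 < N then w (n + 1) i else 0) := by
    intro n hn
    rcases lt_or_ge (n + 1) N with h | h
    · rw [if_pos h]; exact hA1.w_rec n h i a b
    · rw [if_neg (not_lt.2 h)]
      have hn' := Finset.mem_range.1 hn
      have : n = N - 1 := by omega
      subst this
      exact hA1.w_last i a b
  refine (Finset.sum_le_sum key).trans ?_
  have h3 : ∑ n ∈ Finset.range N, (if n + 1 < N then w (n + 1) i else 0)
      = ∑ n ∈ Finset.range (N - 1), w (n + 1) i := by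
    rw [← Finset.sum_filter]
    apply Finset.sum_congr
    · ext n
      simp only [Finset.mem_filter, Finset.mem_range]
      omega
    · intro n _; rfl
  rw [h3]
  have h4 : ∑ n ∈ Finset.range (N - 1), w (n + 1) i = ∑ k ∈ Finset.Ico 1 N, w k i := by
    rw [Finset.sum_Ico_eq_sum_range]
    apply Finset.sum_congr rfl
    intro n _; rw [add_comm 1 n]
  rw [h4, hA1.W_def i]
  have h5 : Finset.Ico 1 N ⊆ Finset.range N := by
    intro k hk
    simp only [Finset.mem_Ico] at hk
    exact Finset.mem_range.2 hk.2
  exact Finset.sum_le_sum_of_subset_of_nonneg h5 fun k _ _ => hA1.w_nonneg k i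

include hrate hA1 in
lemma summable_PkW (i : ℕ) (a : U) (b : V) : Summable fun j => Pk q qb i j a b * W j := by
  have h1 : (fun j => Pk q qb i j a b * W j)
      = fun j => (q i j a b * W j) / (qb i + 1) + (if j = i then W i else 0) := by
    funext j
    unfold Pk
    rcases eq_or_ne i j with h | h
    · subst h; rw [if_pos rfl, if_pos rfl]; ring
    · rw [if_neg h, if_neg (Ne.symm h)]; ring
  rw [h1]
  exact ((summable_qW hA1 i a b).div_const _).add (hasSum_ite_eq i (W i)).summable

include hrate hA1 in
lemma tsum_PkW_eq (i : ℕ) (a : U) (b : V) :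
    ∑' j, Pk q qb i j a b * W j = (∑' j, q i j a b * W j) / (qb i + 1) + W i := by
  have h1 : (fun j => Pk q qb i j a b * W j)
      = fun j => (q i j a b * W j) / (qb i + 1) + (if j = i then W i else 0) := by
    funext j
    unfold Pk
    rcases eq_or_ne i j with h | h
    · subst h; rw [if_pos rfl, if_pos rfl]; ring
    · rw [if_neg h, if_neg (Ne.symm h)]; ring
  rw [h1, Summable.tsum_add ((summable_qW hA1 i a b).div_const _) (hasSum_ite_eq i (W i)).summable,
    tsum_div_const, tsum_ite_eq]

include hrate hA1 in
lemma tsum_PkW_le (i : ℕ) (a : U) (b : V) : ∑' j, Pk q qb i j a b * W j ≤ 2 * W i := by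
  rw [tsum_PkW_eq hrate hA1 i a b]
  have h1 := tsum_qW_le hA1 i a b
  have h2 := qb1_pos hrate i
  have h3 := hA1.W_pos i
  have : (∑' j, q i j a b * W j) / (qb i + 1) ≤ W i := by
    rw [div_le_iff₀ h2]
    nlinarith [qb_nonneg hrate i]
  linarith

include hrate hA1 hA2 in
lemma cont_tsum_PkW (i : ℕ) :
    Continuous fun p : U × V => ∑' j, Pk q qb i j p.1 p.2 * W j := by
  have h1 : (fun p : U × V => ∑' j, Pk q qb i j p.1 p.2 * W j)
      = fun p : U × V => (∑' j, q i j p.1 p.2 * W j) / (qb i + 1) + W i := by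
    funext p; exact tsum_PkW_eq hrate hA1 i p.1 p.2
  rw [h1]
  exact ((hA2.qW_cont i).div_const _).add continuous_const

end kernel


section pTfacts

variable (hrate : RateHyps q qb) (hA1 : A1Hyps q qb N w c W) (hA2 : A2Hyps q r W M)
variable {μ : ProbabilityMeasure U} {ν : ProbabilityMeasure V}

include hrate hA2 in
lemma pT_eq (i j : ℕ) :
    pT q qb i j μ ν = II (μ : Measure U) (ν : Measure V) (fun a b => Pk q qb i j a b) := by
  have h1 : (fun (a : U) (b : V) => Pk q qb i j a b)
      = fun a b => q i j a b / (qb i + 1) + (if i = j then (1:ℝ) else 0) := rfl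
  rw [h1, II_add (((hA2.q_cont i j).div_const _)) continuous_const, II_div, II_const]
  rfl

include hrate hA2 in
lemma pT_nonneg (i j : ℕ) : 0 ≤ pT q qb i j μ ν := by
  rw [pT_eq hrate hA2 i j]
  exact II_nonneg fun a b => Pk_nonneg hrate i j a b

include hrate hA2 in
lemma pT_le_bound (i j : ℕ) {B : ℝ} (hB : ∀ a b, Pk q qb i j a b ≤ B) :
    pT q qb i j μ ν ≤ B := by
  rw [pT_eq hrate hA2 i j]
  exact II_le_const (Pk_cont hrate hA2 i j) hB

include hrate hA2 in
lemma sum_pT_eq (i : ℕ) (F : Finset ℕ) (φ : ℕ → ℝ) :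
    ∑ j ∈ F, pT q qb i j μ ν * φ j
      = II (μ : Measure U) (ν : Measure V) (fun a b => ∑ j ∈ F, Pk q qb i j a b * φ j) := by
  rw [II_sum F _ (fun j => (Pk_cont hrate hA2 i j).mul continuous_const)]
  apply Finset.sum_congr rfl
  intro j _
  rw [pT_eq hrate hA2 i j]
  have : (fun (a : U) (b : V) => Pk q qb i j a b * φ j)
      = fun a b => φ j * Pk q qb i j a b := by funext a b; ring
  rw [this, II_smul]
  ring

include hrate hA1 in
lemma sum_Pkφ_le (i : ℕ) {K : ℝ} (hK : 0 ≤ K) {φ : ℕ → ℝ} (hφ0 : ∀ j, 0 ≤ φ j)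
    (hφ : ∀ j, φ j ≤ K * W j) (F : Finset ℕ) (a : U) (b : V) :
    ∑ j ∈ F, Pk q qb i j a b * φ j ≤ K * (2 * W i) := by
  calc ∑ j ∈ F, Pk q qb i j a b * φ j ≤ ∑ j ∈ F, Pk q qb i j a b * (K * W j) :=
        Finset.sum_le_sum fun j _ =>
          mul_le_mul_of_nonneg_left (hφ j) (Pk_nonneg hrate i j a b)
    _ = K * ∑ j ∈ F, Pk q qb i j a b * W j := by rw [Finset.mul_sum]; congr 1; funext j; ring
    _ ≤ K * ∑' j, Pk q qb i j a b * W j := by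
        apply mul_le_mul_of_nonneg_left _ hK
        exact Summable.sum_le_tsum F (fun j _ => mul_nonneg (Pk_nonneg hrate i j a b) (hA1.W_pos j).le)
          (summable_PkW hrate hA1 i a b)
    _ ≤ K * (2 * W i) := mul_le_mul_of_nonneg_left (tsum_PkW_le hrate hA1 i a b) hK

include hrate hA1 hA2 in
lemma summable_pTφ (i : ℕ) {K : ℝ} (hK : 0 ≤ K) {φ : ℕ → ℝ} (hφ0 : ∀ j, 0 ≤ φ j)
    (hφ : ∀ j, φ j ≤ K * W j) :
    Summable fun j => pT q qb i j μ ν * φ j := by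
  apply summable_of_sum_le (c := K * (2 * W i))
  · intro j
    exact mul_nonneg (pT_nonneg hrate hA2 i j) (hφ0 j)
  · intro F
    rw [sum_pT_eq hrate hA2 i F φ]
    exact II_le_const
      (continuous_finset_sum F fun j _ => (Pk_cont hrate hA2 i j).mul continuous_const)
      (fun a b => sum_Pkφ_le hrate hA1 i hK hφ0 hφ F a b)

include hrate hA1 hA2 in
lemma tsum_pTφ_le (i : ℕ) {K : ℝ} (hK : 0 ≤ K) {φ : ℕ → ℝ} (hφ0 : ∀ j, 0 ≤ φ j)
    (hφ : ∀ j, φ j ≤ K * W j) :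
    ∑' j, pT q qb i j μ ν * φ j ≤ K * (2 * W i) := by
  apply Summable.tsum_le_of_sum_le (summable_pTφ hrate hA1 hA2 i hK hφ0 hφ)
  intro F
  rw [sum_pT_eq hrate hA2 i F φ]
  exact II_le_const
    (continuous_finset_sum F fun j _ => (Pk_cont hrate hA2 i j).mul continuous_const)
    (fun a b => sum_Pkφ_le hrate hA1 i hK hφ0 hφ F a b)

include hrate hA1 hA2 in
lemma tsum_pTφ_mono (i : ℕ) {K : ℝ} (hK : 0 ≤ K) {φ φ' : ℕ → ℝ} (hφ0 : ∀ j, 0 ≤ φ j)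
    (hφ : ∀ j, φ j ≤ K * W j) (hφ0' : ∀ j, 0 ≤ φ' j) (hφ' : ∀ j, φ' j ≤ K * W j)
    (h : ∀ j, φ j ≤ φ' j) :
    ∑' j, pT q qb i j μ ν * φ j ≤ ∑' j, pT q qb i j μ ν * φ' j :=
  Summable.tsum_le_tsum (fun j => mul_le_mul_of_nonneg_left (h j) (pT_nonneg hrate hA2 i j))
    (summable_pTφ hrate hA1 hA2 i hK hφ0 hφ) (summable_pTφ hrate hA1 hA2 i hK hφ0' hφ')

end pTfacts


section tail

variable (hrate : RateHyps q qb) (hA1 : A1Hyps q qb N w c W) (hA2 : A2Hyps q r W M)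

include hrate hA1 hA2 in
lemma dini_tail (i : ℕ) {ε : ℝ} (hε : 0 < ε) :
    ∃ m : ℕ, ∀ (a : U) (b : V),
      (∑' j, Pk q qb i j a b * W j) - ∑ j ∈ Finset.range m, Pk q qb i j a b * W j ≤ ε := by
  set t : ℕ → U × V → ℝ := fun m p =>
    (∑' j, Pk q qb i j p.1 p.2 * W j) - ∑ j ∈ Finset.range m, Pk q qb i j p.1 p.2 * W j with ht
  have hcont : ∀ m, Continuous (t m) := fun m =>
    (cont_tsum_PkW hrate hA1 hA2 i).sub
      (continuous_finset_sum _ fun j _ => (Pk_cont hrate hA2 i j).mul continuous_const)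
  have hanti : ∀ {m m' : ℕ}, m ≤ m' → ∀ p, t m' p ≤ t m p := by
    intro m m' hmm p
    apply sub_le_sub_left
    apply Finset.sum_le_sum_of_subset_of_nonneg (Finset.range_subset_range.2 hmm)
    intro j _ _
    exact mul_nonneg (Pk_nonneg hrate i j p.1 p.2) (hA1.W_pos j).le
  have hopen : ∀ m, IsOpen {p : U × V | t m p < ε} := fun m =>
    isOpen_lt (hcont m) continuous_const
  have hcover : (Set.univ : Set (U × V)) ⊆ ⋃ m : ℕ, {p : U × V | t m p < ε} := by
    intro p _
    have h1 : Tendsto (fun m => ∑ j ∈ Finset.range m, Pk q qb i j p.1 p.2 * W j) atTop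
        (𝓝 (∑' j, Pk q qb i j p.1 p.2 * W j)) :=
      (summable_PkW hrate hA1 i p.1 p.2).hasSum.tendsto_sum_nat
    have h2 : Tendsto (fun m => t m p) atTop (𝓝 0) := by
      have := (tendsto_const_nhds (x := ∑' j, Pk q qb i j p.1 p.2 * W j)
        (f := atTop (α := ℕ))).sub h1
      simpa using this
    have h3 := (h2.eventually (eventually_lt_nhds hε)).exists
    obtain ⟨m, hm⟩ := h3
    exact Set.mem_iUnion.2 ⟨m, hm⟩
  obtain ⟨F, hF⟩ := isCompact_univ.elim_finite_subcover _ hopen hcover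
  refine ⟨F.sup id, fun a b => ?_⟩
  have := hF (Set.mem_univ (a, b))
  obtain ⟨m, hm, hmem⟩ := Set.mem_iUnion₂.1 this
  exact le_of_lt (lt_of_le_of_lt (hanti (Finset.le_sup (f := id) hm) (a, b)) hmem)

include hrate hA1 hA2 in
lemma tail_small (i : ℕ) {ε : ℝ} (hε : 0 < ε) :
    ∃ m : ℕ, ∀ (μ : ProbabilityMeasure U) (ν : ProbabilityMeasure V),
      ∑' j, (if j ∈ Finset.range m then 0 else pT q qb i j μ ν * W j) ≤ ε := by
  obtain ⟨m, hm⟩ := dini_tail hrate hA1 hA2 i hε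
  refine ⟨m, fun μ ν => ?_⟩
  have hWle : ∀ j, W j ≤ 1 * W j := fun j => by rw [one_mul]
  have hsummW : Summable fun j => pT q qb i j μ ν * W j :=
    summable_pTφ hrate hA1 hA2 i zero_le_one (fun j => (hA1.W_pos j).le) hWle
  have hsumm : Summable fun j => if j ∈ Finset.range m then 0 else pT q qb i j μ ν * W j := by
    apply Summable.of_nonneg_of_le _ _ hsummW
    · intro j; split_ifs
      · exact le_refl 0
      · exact mul_nonneg (pT_nonneg hrate hA2 i j) (hA1.W_pos j).le
    · intro j; split_ifs
      · exact mul_nonneg (pT_nonneg hrate hA2 i j) (hA1.W_pos j).le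
      · exact le_refl _
  apply Summable.tsum_le_of_sum_le hsumm
  intro G
  have hsplit : ∑ j ∈ G, (if j ∈ Finset.range m then 0 else pT q qb i j μ ν * W j)
      = ∑ j ∈ G.filter (fun j => j ∉ Finset.range m), pT q qb i j μ ν * W j := by
    rw [Finset.sum_filter]
    apply Finset.sum_congr rfl
    intro j _
    by_cases h : j ∈ Finset.range m <;> simp [h]
  rw [hsplit, sum_pT_eq hrate hA2 i _ W]
  apply II_le_const
    (continuous_finset_sum _ fun j _ => (Pk_cont hrate hA2 i j).mul continuous_const)
  intro a b
  set G' := G.filter (fun j => j ∉ Finset.range m) with hG'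
  have hdisj : Disjoint G' (Finset.range m) :=
    Finset.disjoint_left.2 fun j hj hj2 => (Finset.mem_filter.1 hj).2 hj2
  have hunion : ∑ j ∈ G', Pk q qb i j a b * W j + ∑ j ∈ Finset.range m, Pk q qb i j a b * W j
      = ∑ j ∈ G' ∪ Finset.range m, Pk q qb i j a b * W j :=
    (Finset.sum_union hdisj).symm
  have hle : ∑ j ∈ G' ∪ Finset.range m, Pk q qb i j a b * W j
      ≤ ∑' j, Pk q qb i j a b * W j :=
    Summable.sum_le_tsum _ (fun j _ => mul_nonneg (Pk_nonneg hrate i j a b) (hA1.W_pos j).le)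
      (summable_PkW hrate hA1 i a b)
  have := hm a b
  linarith

end tail


section infsup

variable {X Y : Type} [Nonempty X] [Nonempty Y]

lemma infsup_mono {f g : X → Y → ℝ} {CB : ℝ} (hg : ∀ x y, g x y ≤ CB)
    (hf0 : ∀ x y, 0 ≤ f x y) (h : ∀ x y, f x y ≤ g x y) :
    (⨅ x, ⨆ y, f x y) ≤ ⨅ x, ⨆ y, g x y := by
  have bddg : ∀ x, BddAbove (Set.range (g x)) := fun x => ⟨CB, by rintro z ⟨y, rfl⟩; exact hg x y⟩
  have bddf : ∀ x, BddAbove (Set.range (f x)) := fun x =>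
    ⟨CB, by rintro z ⟨y, rfl⟩; exact (h x y).trans (hg x y)⟩
  have bddbelowf : BddBelow (Set.range fun x => ⨆ y, f x y) := by
    refine ⟨0, ?_⟩
    rintro z ⟨x, rfl⟩
    exact le_trans (hf0 x (Classical.arbitrary Y)) (le_ciSup (bddf x) _)
  exact ciInf_mono bddbelowf fun x => ciSup_le fun y => (h x y).trans (le_ciSup (bddg x) y)

lemma infsup_le_add {f g : X → Y → ℝ} {CB ε : ℝ} (hf : ∀ x y, f x y ≤ CB)
    (hg0 : ∀ x y, 0 ≤ g x y) (hgB : ∀ x y, g x y ≤ CB) (h : ∀ x y, g x y ≤ f x y + ε) :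
    (⨅ x, ⨆ y, g x y) ≤ (⨅ x, ⨆ y, f x y) + ε := by
  have bddf : ∀ x, BddAbove (Set.range (f x)) := fun x => ⟨CB, by rintro z ⟨y, rfl⟩; exact hf x y⟩
  have bddg : ∀ x, BddAbove (Set.range (g x)) := fun x => ⟨CB, by rintro z ⟨y, rfl⟩; exact hgB x y⟩
  have step : ∀ x, (⨆ y, g x y) ≤ (⨆ y, f x y) + ε := fun x =>
    ciSup_le fun y => (h x y).trans (add_le_add_left (le_ciSup (bddf x) y) ε)
  have bddbelowg : BddBelow (Set.range fun x => ⨆ y, g x y) := by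
    refine ⟨0, ?_⟩
    rintro z ⟨x, rfl⟩
    exact le_trans (hg0 x (Classical.arbitrary Y)) (le_ciSup (bddg x) _)
  rw [← sub_le_iff_le_add]
  apply le_ciInf
  intro x
  rw [sub_le_iff_le_add]
  exact (ciInf_le bddbelowg x).trans (step x)

end infsup

section G

variable (hrate : RateHyps q qb) (hA1 : A1Hyps q qb N w c W) (hA2 : A2Hyps q r W M)
    (hα : 0 < α)
variable {μ : ProbabilityMeasure U} {ν : ProbabilityMeasure V}

/-- The integrand of `Iop`. -/
def Gf (q : ℕ → ℕ → U → V → ℝ) (r : ℕ → U → V → ℝ) (qb : ℕ → ℝ) (α : ℝ) (φ : ℕ → ℝ) (i : ℕ)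
    (μ : ProbabilityMeasure U) (ν : ProbabilityMeasure V) : ℝ :=
  rT r i μ ν / (α + qb i + 1) +
    ((qb i + 1) / (α + qb i + 1)) * ∑' j, pT q qb i j μ ν * φ j

lemma Iop_eq (φ : ℕ → ℝ) (i : ℕ) :
    Iop q r qb α φ i = ⨅ μ : ProbabilityMeasure U, ⨆ ν : ProbabilityMeasure V,
      Gf q r qb α φ i μ ν := rfl

include hrate hα in
lemma denom_pos (i : ℕ) : 0 < α + qb i + 1 := by linarith [qb_nonneg hrate i]

include hrate hα in
lemma coeff_nonneg (i : ℕ) : 0 ≤ (qb i + 1) / (α + qb i + 1) :=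
  div_nonneg (qb1_pos hrate i).le (denom_pos hrate hα i).le

include hrate hα in
lemma coeff_le_one (i : ℕ) : (qb i + 1) / (α + qb i + 1) ≤ 1 := by
  rw [div_le_one (denom_pos hrate hα i)]
  linarith

include hA2 in
lemma rT_nonneg (i : ℕ) : 0 ≤ rT r i μ ν :=
  integral_nonneg fun b => integral_nonneg fun a => hA2.r_nonneg i a b

include hA2 in
lemma rT_le (i : ℕ) : rT r i μ ν ≤ M * W i := by
  have : rT r i μ ν = II (μ : Measure U) (ν : Measure V) (fun a b => r i a b) := rfl
  rw [this]
  exact II_le_const (hA2.r_cont i) fun a b => hA2.r_le i a b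

include hrate hA1 hA2 hα in
lemma Gf_nonneg (φ : ℕ → ℝ) (hφ0 : ∀ j, 0 ≤ φ j) (i : ℕ) : 0 ≤ Gf q r qb α φ i μ ν := by
  apply add_nonneg
  · exact div_nonneg (rT_nonneg hA2 i) (denom_pos hrate hα i).le
  · exact mul_nonneg (coeff_nonneg hrate hα i)
      (tsum_nonneg fun j => mul_nonneg (pT_nonneg hrate hA2 i j) (hφ0 j))

include hrate hA1 hA2 hα in
lemma Gf_le (φ : ℕ → ℝ) {K : ℝ} (hK : 0 ≤ K) (hφ0 : ∀ j, 0 ≤ φ j)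
    (hφ : ∀ j, φ j ≤ K * W j) (i : ℕ) :
    Gf q r qb α φ i μ ν ≤ M * W i + K * (2 * W i) := by
  have h1 : rT r i μ ν / (α + qb i + 1) ≤ M * W i :=
    (div_le_self (rT_nonneg hA2 i) (by linarith [qb_nonneg hrate i])).trans (rT_le hA2 i)
  have h2 : ((qb i + 1) / (α + qb i + 1)) * ∑' j, pT q qb i j μ ν * φ j
      ≤ K * (2 * W i) := by
    have ht := tsum_pTφ_le hrate hA1 hA2 (μ := μ) (ν := ν) i hK hφ0 hφ
    have htn : 0 ≤ ∑' j, pT q qb i j μ ν * φ j :=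
      tsum_nonneg fun j => mul_nonneg (pT_nonneg hrate hA2 i j) (hφ0 j)
    calc ((qb i + 1) / (α + qb i + 1)) * ∑' j, pT q qb i j μ ν * φ j
        ≤ 1 * ∑' j, pT q qb i j μ ν * φ j :=
          mul_le_mul_of_nonneg_right (coeff_le_one hrate hα i) htn
      _ ≤ K * (2 * W i) := by rw [one_mul]; exact ht
  exact add_le_add h1 h2

include hrate hA1 hA2 hα in
lemma Gf_mono {K : ℝ} (hK : 0 ≤ K) {φ φ' : ℕ → ℝ} (hφ0 : ∀ j, 0 ≤ φ j)
    (hφ : ∀ j, φ j ≤ K * W j) (hφ0' : ∀ j, 0 ≤ φ' j) (hφ' : ∀ j, φ' j ≤ K * W j)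
    (h : ∀ j, φ j ≤ φ' j) (i : ℕ) :
    Gf q r qb α φ i μ ν ≤ Gf q r qb α φ' i μ ν := by
  apply add_le_add_right
  exact mul_le_mul_of_nonneg_left
    (tsum_pTφ_mono hrate hA1 hA2 i hK hφ0 hφ hφ0' hφ' h) (coeff_nonneg hrate hα i)

include hrate hA1 hA2 hα in
lemma Gf_diff_le (i : ℕ) {K : ℝ} (hK : 0 ≤ K) {φ φ' : ℕ → ℝ} (hφ0 : ∀ j, 0 ≤ φ j)
    (hφ : ∀ j, φ j ≤ K * W j) (hφ0' : ∀ j, 0 ≤ φ' j) (hφ' : ∀ j, φ' j ≤ K * W j)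
    {ε : ℝ} (h : ∑' j, pT q qb i j μ ν * (φ' j - φ j) ≤ ε)
    (hd0 : ∀ j, 0 ≤ φ' j - φ j) :
    Gf q r qb α φ' i μ ν ≤ Gf q r qb α φ i μ ν + ε := by
  have hsub : ∑' j, pT q qb i j μ ν * φ' j - ∑' j, pT q qb i j μ ν * φ j
      = ∑' j, pT q qb i j μ ν * (φ' j - φ j) := by
    rw [← Summable.tsum_sub (summable_pTφ hrate hA1 hA2 i hK hφ0' hφ')
      (summable_pTφ hrate hA1 hA2 i hK hφ0 hφ)]
    congr 1; funext j; ring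
  have hεn : 0 ≤ ε := le_trans (tsum_nonneg fun j =>
    mul_nonneg (pT_nonneg hrate hA2 i j) (hd0 j)) h
  unfold Gf
  have hc0 := coeff_nonneg hrate hα i
  have hc1 := coeff_le_one hrate hα i
  nlinarith [hsub, h, mul_le_mul_of_nonneg_right hc1 hεn]

end G

end ST17
/-- Proposition 2: the iterates are nondecreasing, converge pointwise to some
`u* ∈ B_W(S)`, and `u*` is a fixed point of `T`. -/
theorem stmt17 {U V : Type} [MetricSpace U] [CompactSpace U] [Nonempty U]
    [MeasurableSpace U] [BorelSpace U]
    [MetricSpace V] [CompactSpace V] [Nonempty V]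
    [MeasurableSpace V] [BorelSpace V]
    (q : ℕ → ℕ → U → V → ℝ) (r : ℕ → U → V → ℝ) (qb : ℕ → ℝ)
    (N : ℕ) (w : ℕ → ℕ → ℝ) (c : ℝ) (W : ℕ → ℝ) (M : ℝ) (α : ℝ) (ψ₁ ψ₂ : ℕ → ℝ)
    (hrate : RateHyps q qb) (hA1 : A1Hyps q qb N w c W)
    (hA2 : A2Hyps q r W M) (hψ : PsiHyps ψ₁ ψ₂ W M) (hα : 0 < α) :
    ∀ u : ℕ → ℕ → ℝ, u 0 = ψ₂ → (∀ n, u (n + 1) = Tmap q r qb α ψ₁ ψ₂ (u n)) →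
      (∀ (n : ℕ) (i : ℕ), u n i ≤ u (n + 1) i) ∧
      ∃ ustar ∈ BW W,
        (∀ i, Tendsto (fun n => u n i) atTop (𝓝 (ustar i))) ∧
        (∀ i, Tmap q r qb α ψ₁ ψ₂ ustar i = ustar i) := by

  classical
  intro u hu0 hu
  haveI hPU : Nonempty (ProbabilityMeasure U) :=
    ⟨⟨Measure.dirac (Classical.arbitrary U), inferInstance⟩⟩
  haveI hPV : Nonempty (ProbabilityMeasure V) :=
    ⟨⟨Measure.dirac (Classical.arbitrary V), inferInstance⟩⟩
  have huT : ∀ n j, u (n + 1) j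
      = min (max (Iop q r qb α (u n) j) (ψ₂ j)) (ψ₁ j) := by
    intro n j; rw [hu n]; rfl
  have hM : 0 < M := by
    have h1 := hψ.ψ₂_nonneg 0
    have h2 := hψ.ψ₂_lt_ψ₁ 0
    have h3 := hψ.ψ₁_le 0
    nlinarith [hA1.W_pos 0]
  -- bounds on the iterates
  have hbound : ∀ n, (∀ j, 0 ≤ u n j) ∧ (∀ j, u n j ≤ ψ₁ j) := by
    intro n
    induction n with
    | zero => rw [hu0]; exact ⟨hψ.ψ₂_nonneg, fun j => (hψ.ψ₂_lt_ψ₁ j).le⟩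
    | succ n ih =>
      constructor
      · intro j
        rw [huT n j]
        exact le_min (le_trans (hψ.ψ₂_nonneg j) (le_max_right _ _))
          (le_trans (hψ.ψ₂_nonneg j) (hψ.ψ₂_lt_ψ₁ j).le)
      · intro j
        rw [huT n j]
        exact min_le_right _ _
  have hadm : ∀ n j, u n j ≤ M * W j := fun n j => ((hbound n).2 j).trans (hψ.ψ₁_le j)
  -- monotonicity
  have hmono : ∀ n j, u n j ≤ u (n + 1) j := by
    intro n
    induction n with
    | zero =>
      intro j
      rw [hu0, huT 0 j, hu0]
      exact le_min (le_max_right _ _) (hψ.ψ₂_lt_ψ₁ j).le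
    | succ n ih =>
      intro j
      rw [huT n j, huT (n + 1) j]
      apply min_le_min _ (le_refl _)
      apply max_le_max _ (le_refl _)
      rw [ST17.Iop_eq, ST17.Iop_eq]
      exact ST17.infsup_mono
        (fun μ ν => ST17.Gf_le hrate hA1 hA2 hα (u (n + 1)) hM.le (hbound (n + 1)).1
          (hadm (n + 1)) j)
        (fun μ ν => ST17.Gf_nonneg hrate hA1 hA2 hα (u n) (hbound n).1 j)
        (fun μ ν => ST17.Gf_mono hrate hA1 hA2 hα hM.le (hbound n).1 (hadm n)
          (hbound (n + 1)).1 (hadm (n + 1)) ih j)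
  -- the limit function
  set ustar : ℕ → ℝ := fun j => ⨆ n, u n j with hustar
  have hmonoj : ∀ j, Monotone fun n => u n j := fun j =>
    monotone_nat_of_le_succ fun n => hmono n j
  have hbddj : ∀ j, BddAbove (Set.range fun n => u n j) := fun j =>
    ⟨M * W j, by rintro x ⟨n, rfl⟩; exact hadm n j⟩
  have htendsto : ∀ j, Tendsto (fun n => u n j) atTop (𝓝 (ustar j)) := fun j =>
    tendsto_atTop_ciSup (hmonoj j) (hbddj j)
  have hule : ∀ n j, u n j ≤ ustar j := fun n j => le_ciSup (hbddj j) n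
  have hust_le : ∀ j, ustar j ≤ M * W j := fun j => ciSup_le fun n => hadm n j
  have hust0 : ∀ j, 0 ≤ ustar j := fun j => le_trans ((hbound 0).1 j) (hule 0 j)
  have hd0 : ∀ n j, 0 ≤ ustar j - u n j := fun n j => by linarith [hule n j]
  have hdle : ∀ n j, ustar j - u n j ≤ M * W j := fun n j => by
    have := (hbound n).1 j; have := hust_le j; linarith
  -- convergence of Iop
  have hIop : ∀ i, Tendsto (fun n => Iop q r qb α (u n) i) atTop
      (𝓝 (Iop q r qb α ustar i)) := by
    intro i
    rw [Metric.tendsto_atTop]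
    intro ε hε
    have hδ : 0 < ε / (8 * (M + 1)) := by positivity
    obtain ⟨m, hm⟩ := ST17.tail_small hrate hA1 hA2 i hδ
    choose B hB using fun j => ST17.bound2 (ST17.Pk_cont hrate hA2 (V := V) i j)
    have hpTB : ∀ (j : ℕ) (μ : ProbabilityMeasure U) (ν : ProbabilityMeasure V),
        pT q qb i j μ ν ≤ B j := fun j μ ν =>
      ST17.pT_le_bound hrate hA2 i j fun a b =>
        (le_abs_self _).trans (le_of_eq_of_le (Real.norm_eq_abs _).symm (hB j a b))
    have hdconv : ∀ j, Tendsto (fun n => ustar j - u n j) atTop (𝓝 0) := fun j => by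
      simpa using (tendsto_const_nhds (x := ustar j)).sub (htendsto j)
    have hsum0 : Tendsto (fun n => ∑ j ∈ Finset.range m, B j * (ustar j - u n j)) atTop
        (𝓝 0) := by
      have h := tendsto_finset_sum (Finset.range m)
        (fun j (_ : j ∈ Finset.range m) => (hdconv j).const_mul (B j))
      simpa using h
    have hev : ∀ᶠ n in atTop,
        ∑ j ∈ Finset.range m, B j * (ustar j - u n j) < ε / 4 :=
      hsum0.eventually (eventually_lt_nhds (by positivity))
    obtain ⟨n₀, hn₀⟩ := eventually_atTop.1 hev
    refine ⟨n₀, fun n hn => ?_⟩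
    -- the key uniform bound on the tail sums
    have hkey : ∀ (μ : ProbabilityMeasure U) (ν : ProbabilityMeasure V),
        ∑' j, pT q qb i j μ ν * (ustar j - u n j) ≤ ε / 2 := by
      intro μ ν
      have hsummain : Summable fun j => pT q qb i j μ ν * (ustar j - u n j) :=
        ST17.summable_pTφ hrate hA1 hA2 i hM.le (hd0 n) (hdle n)
      have hterm0 : ∀ j, 0 ≤ pT q qb i j μ ν * (ustar j - u n j) := fun j =>
        mul_nonneg (ST17.pT_nonneg hrate hA2 i j) (hd0 n j)
      have hs1 : Summable fun j =>
          if j ∈ Finset.range m then pT q qb i j μ ν * (ustar j - u n j) else 0 := by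
        apply Summable.of_nonneg_of_le _ _ hsummain
        · intro j; split_ifs; exacts [hterm0 j, le_refl 0]
        · intro j; split_ifs; exacts [le_refl _, hterm0 j]
      have hs2 : Summable fun j =>
          if j ∈ Finset.range m then 0 else pT q qb i j μ ν * (ustar j - u n j) := by
        apply Summable.of_nonneg_of_le _ _ hsummain
        · intro j; split_ifs; exacts [le_refl 0, hterm0 j]
        · intro j; split_ifs; exacts [hterm0 j, le_refl _]
      have hsW : Summable fun j =>
          if j ∈ Finset.range m then 0 else pT q qb i j μ ν * W j := by
        apply Summable.of_nonneg_of_le _ _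
          (ST17.summable_pTφ hrate hA1 hA2 (μ := μ) (ν := ν) i zero_le_one (fun j => (hA1.W_pos j).le)
            (fun j => le_of_eq (one_mul (W j)).symm))
        · intro j; split_ifs
          · exact le_refl 0
          · exact mul_nonneg (ST17.pT_nonneg hrate hA2 i j) (hA1.W_pos j).le
        · intro j; split_ifs
          · exact mul_nonneg (ST17.pT_nonneg hrate hA2 i j) (hA1.W_pos j).le
          · exact le_refl _
      have hsplit : (∑' j, pT q qb i j μ ν * (ustar j - u n j))
          = (∑' j, if j ∈ Finset.range m then pT q qb i j μ ν * (ustar j - u n j) else 0)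
            + ∑' j, if j ∈ Finset.range m then 0
              else pT q qb i j μ ν * (ustar j - u n j) := by
        rw [← Summable.tsum_add hs1 hs2]
        congr 1; funext j; split_ifs <;> simp
      have hA : (∑' j, if j ∈ Finset.range m then pT q qb i j μ ν * (ustar j - u n j)
          else 0) ≤ ε / 4 := by
        rw [tsum_eq_sum (s := Finset.range m) (fun j hj => if_neg hj)]
        have h1 : ∑ j ∈ Finset.range m,
            (if j ∈ Finset.range m then pT q qb i j μ ν * (ustar j - u n j) else 0)
            ≤ ∑ j ∈ Finset.range m, B j * (ustar j - u n j) := by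
          apply Finset.sum_le_sum
          intro j hj
          rw [if_pos hj]
          exact mul_le_mul_of_nonneg_right (hpTB j μ ν) (hd0 n j)
        exact h1.trans (hn₀ n hn).le
      have hC : (∑' j, if j ∈ Finset.range m then 0
          else pT q qb i j μ ν * (ustar j - u n j)) ≤ ε / 4 := by
        have h1 : ∀ j, (if j ∈ Finset.range m then 0
            else pT q qb i j μ ν * (ustar j - u n j))
            ≤ M * (if j ∈ Finset.range m then 0 else pT q qb i j μ ν * W j) := by
          intro j
          split_ifs
          · simp
          · have := mul_le_mul_of_nonneg_left (hdle n j)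
              (ST17.pT_nonneg hrate hA2 (μ := μ) (ν := ν) i j)
            calc pT q qb i j μ ν * (ustar j - u n j) ≤ pT q qb i j μ ν * (M * W j) := this
              _ = M * (pT q qb i j μ ν * W j) := by ring
        calc (∑' j, if j ∈ Finset.range m then 0 else pT q qb i j μ ν * (ustar j - u n j))
            ≤ ∑' j, M * (if j ∈ Finset.range m then 0 else pT q qb i j μ ν * W j) :=
              Summable.tsum_le_tsum h1 hs2 (hsW.mul_left M)
          _ = M * ∑' j, (if j ∈ Finset.range m then 0 else pT q qb i j μ ν * W j) :=
              tsum_mul_left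
          _ ≤ M * (ε / (8 * (M + 1))) :=
              mul_le_mul_of_nonneg_left (hm μ ν) hM.le
          _ ≤ ε / 4 := by
              rw [mul_div_assoc', div_le_div_iff₀ (by positivity) (by norm_num)]
              nlinarith
      linarith [hsplit, hA, hC]
    -- translate into a distance bound on Iop
    have hCB : ∀ (φ : ℕ → ℝ), (∀ j, 0 ≤ φ j) → (∀ j, φ j ≤ M * W j) →
        ∀ (μ : ProbabilityMeasure U) (ν : ProbabilityMeasure V),
          ST17.Gf q r qb α φ i μ ν ≤ M * W i + M * (2 * W i) := fun φ h0 h1 μ ν =>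
      ST17.Gf_le hrate hA1 hA2 hα φ hM.le h0 h1 i
    have hlow : Iop q r qb α (u n) i ≤ Iop q r qb α ustar i := by
      rw [ST17.Iop_eq, ST17.Iop_eq]
      exact ST17.infsup_mono (fun μ ν => hCB ustar hust0 hust_le μ ν)
        (fun μ ν => ST17.Gf_nonneg hrate hA1 hA2 hα (u n) (hbound n).1 i)
        (fun μ ν => ST17.Gf_mono hrate hA1 hA2 hα hM.le (hbound n).1 (hadm n)
          hust0 hust_le (fun j => hule n j) i)
    have hhigh : Iop q r qb α ustar i ≤ Iop q r qb α (u n) i + ε / 2 := by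
      rw [ST17.Iop_eq, ST17.Iop_eq]
      exact ST17.infsup_le_add (fun μ ν => hCB (u n) (hbound n).1 (hadm n) μ ν)
        (fun μ ν => ST17.Gf_nonneg hrate hA1 hA2 hα ustar hust0 i)
        (fun μ ν => hCB ustar hust0 hust_le μ ν)
        (fun μ ν => ST17.Gf_diff_le hrate hA1 hA2 hα i hM.le (hbound n).1 (hadm n)
          hust0 hust_le (hkey μ ν) (hd0 n))
    rw [Real.dist_eq, abs_sub_lt_iff]
    exact ⟨by linarith, by linarith⟩
  -- assemble the result
  refine ⟨hmono, ustar, ⟨hust0, ⟨M, ?_⟩⟩, htendsto, ?_⟩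
  · rintro x ⟨j, rfl⟩
    rw [div_le_iff₀ (hA1.W_pos j)]
    exact hust_le j
  · intro i
    have h1 : Tendsto (fun n => u (n + 1) i) atTop (𝓝 (ustar i)) :=
      (htendsto i).comp (tendsto_add_atTop_nat 1)
    have h2 : Tendsto (fun n => u (n + 1) i) atTop
        (𝓝 (min (max (Iop q r qb α ustar i) (ψ₂ i)) (ψ₁ i))) := by
      simp_rw [fun n => huT n i]
      exact ((hIop i).max tendsto_const_nhds).min tendsto_const_nhds
    have := tendsto_nhds_unique h2 h1
    exact this
end
end

section
/- Under (A1) and (A2), a function φ ∈ B_W(S) is a fixed point of T (i.e., Tφ(i) = φ(i) for all i ∈ S) if and only if φ satisfies the dynamic programming inequalities with bilateral constraints (3.1): ψ_2(i) ≤ φ(i) ≤ ψ_1(i) for all i; αφ(i) − H_α(i,φ) = 0 whenever ψ_2(i) < φ(i) < ψ_1(i); αφ(i) − H_α(i,φ) ≥ 0 whenever φ(i) = ψ_2(i); αφ(i) − H_α(i,φ) ≤ 0 whenever φ(i) = ψ_1(i). -/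
open MeasureTheory Filter Topology

namespace Stmt19Aux
open MeasureTheory

set_option linter.unusedSectionVars false

variable {U V : Type} [MetricSpace U] [CompactSpace U] [Nonempty U]
    [MeasurableSpace U] [BorelSpace U]
    [MetricSpace V] [CompactSpace V] [Nonempty V]
    [MeasurableSpace V] [BorelSpace V]

noncomputable instance : Nonempty (ProbabilityMeasure U) :=
  ⟨⟨Measure.dirac (Classical.arbitrary U), Measure.dirac.isProbabilityMeasure⟩⟩

/-- double integral -/
noncomputable def II (h : U × V → ℝ) (μ : ProbabilityMeasure U)
    (ν : ProbabilityMeasure V) : ℝ :=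
  ∫ b, (∫ a, h (a, b) ∂(μ : Measure U)) ∂(ν : Measure V)

theorem exists_bound (h : U × V → ℝ) (hc : Continuous h) : ∃ C : ℝ, ∀ p, |h p| ≤ C := by
  obtain ⟨p, -, hp⟩ := isCompact_univ.exists_isMaxOn Set.univ_nonempty
    (hc.abs.continuousOn (s := Set.univ))
  exact ⟨|h p|, fun x => hp (Set.mem_univ x)⟩

theorem int_slice {h : U × V → ℝ} (hc : Continuous h) (b : V) (μ : ProbabilityMeasure U) :
    Integrable (fun a => h (a, b)) (μ : Measure U) := by
  obtain ⟨C, hC⟩ := exists_bound h hc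
  exact ⟨(hc.comp (by continuity)).aestronglyMeasurable,
    HasFiniteIntegral.of_bounded (C := C) (ae_of_all _ fun a => hC (a, b))⟩

theorem int_inner {h : U × V → ℝ} (hc : Continuous h) (μ : ProbabilityMeasure U)
    (ν : ProbabilityMeasure V) :
    Integrable (fun b => ∫ a, h (a, b) ∂(μ : Measure U)) (ν : Measure V) := by
  obtain ⟨C, hC⟩ := exists_bound h hc
  refine ⟨(hc.stronglyMeasurable.integral_prod_left').aestronglyMeasurable,
    HasFiniteIntegral.of_bounded (C := C) (ae_of_all _ fun b => ?_)⟩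
  calc ‖∫ a, h (a, b) ∂(μ : Measure U)‖ ≤ C * ((μ : Measure U) Set.univ).toReal :=
        norm_integral_le_of_norm_le_const (ae_of_all _ fun a => by simpa using hC (a, b))
    _ = C := by simp

theorem II_nonneg {h : U × V → ℝ} (h0 : ∀ p, 0 ≤ h p) (μ : ProbabilityMeasure U)
    (ν : ProbabilityMeasure V) : 0 ≤ II h μ ν :=
  integral_nonneg fun b => integral_nonneg fun a => h0 (a, b)

theorem II_mono {h g : U × V → ℝ} (hc : Continuous h) (gc : Continuous g)
    (hle : ∀ p, h p ≤ g p) (μ : ProbabilityMeasure U) (ν : ProbabilityMeasure V) :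
    II h μ ν ≤ II g μ ν :=
  integral_mono (int_inner hc μ ν) (int_inner gc μ ν) fun b =>
    integral_mono (int_slice hc b μ) (int_slice gc b μ) fun a => hle (a, b)

theorem II_const (C : ℝ) (μ : ProbabilityMeasure U) (ν : ProbabilityMeasure V) :
    II (fun _ => C) μ ν = C := by
  simp [II]

theorem II_le_const {h : U × V → ℝ} (hc : Continuous h) {C : ℝ} (hle : ∀ p, h p ≤ C)
    (μ : ProbabilityMeasure U) (ν : ProbabilityMeasure V) : II h μ ν ≤ C := by
  have := II_mono hc continuous_const hle μ ν
  rwa [II_const] at this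

theorem const_le_II {h : U × V → ℝ} (hc : Continuous h) {C : ℝ} (hle : ∀ p, C ≤ h p)
    (μ : ProbabilityMeasure U) (ν : ProbabilityMeasure V) : C ≤ II h μ ν := by
  have := II_mono continuous_const hc hle μ ν
  rwa [II_const] at this

theorem II_finset_sum {ι : Type*} (F : Finset ι) (h : ι → U × V → ℝ)
    (hc : ∀ j ∈ F, Continuous (h j)) (μ : ProbabilityMeasure U)
    (ν : ProbabilityMeasure V) :
    II (fun p => ∑ j ∈ F, h j p) μ ν = ∑ j ∈ F, II (h j) μ ν := by
  unfold II
  rw [← integral_finset_sum F fun j hj => int_inner (hc j hj) μ ν]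
  congr 1
  funext b
  rw [← integral_finset_sum F fun j hj => int_slice (hc j hj) b μ]

theorem II_mul_const (h : U × V → ℝ) (c : ℝ) (μ : ProbabilityMeasure U)
    (ν : ProbabilityMeasure V) : II (fun p => h p * c) μ ν = II h μ ν * c := by
  simp [II, integral_mul_const]

theorem qT_eq_II [MeasurableSpace U] (q : ℕ → ℕ → U → V → ℝ) (i j : ℕ)
    (μ : ProbabilityMeasure U) (ν : ProbabilityMeasure V) :
    qT q i j μ ν = II (fun p => q i j p.1 p.2) μ ν := rfl

theorem rT_eq_II (r : ℕ → U → V → ℝ) (i : ℕ)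
    (μ : ProbabilityMeasure U) (ν : ProbabilityMeasure V) :
    rT r i μ ν = II (fun p => r i p.1 p.2) μ ν := rfl

end Stmt19Aux

namespace Stmt19Aux

variable {U V : Type} [MetricSpace U] [CompactSpace U] [Nonempty U]
    [MeasurableSpace U] [BorelSpace U]
    [MetricSpace V] [CompactSpace V] [Nonempty V]
    [MeasurableSpace V] [BorelSpace V]

theorem key_identity
    (q : ℕ → ℕ → U → V → ℝ) (r : ℕ → U → V → ℝ) (qb : ℕ → ℝ) (W : ℕ → ℝ)
    (φ : ℕ → ℝ) (α K : ℝ) (i : ℕ)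
    (hoff : ∀ j a b, j ≠ i → 0 ≤ q i j a b)
    (hsum : ∀ a b, Summable fun j => q i j a b)
    (hcons : ∀ a b, ∑' j, q i j a b = 0)
    (hstable : IsLUB (Set.range fun ab : U × V =>
      ∑' j, if j = i then (0 : ℝ) else q i j ab.1 ab.2) (qb i))
    (hWsum : ∀ a b, Summable fun j => q i j a b * W j)
    (hqc : ∀ j, Continuous fun ab : U × V => q i j ab.1 ab.2)
    (hqWc : Continuous fun ab : U × V => ∑' j, q i j ab.1 ab.2 * W j)
    (hrc : Continuous fun ab : U × V => r i ab.1 ab.2)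
    (hr0 : ∀ a b, 0 ≤ r i a b)
    (hφ0 : ∀ j, 0 ≤ φ j) (hφK : ∀ j, φ j ≤ K * W j) (hK0 : 0 ≤ K)
    (hW0 : ∀ j, 0 < W j) (hα : 0 < α) :
    Iop q r qb α φ i = (Hop q r φ i + (qb i + 1) * φ i) / (α + qb i + 1) := by
  have hqb0 : 0 ≤ qb i := by
    refine le_trans (tsum_nonneg fun j => ?_)
      (hstable.1 ⟨(Classical.arbitrary U, Classical.arbitrary V), rfl⟩)
    by_cases hj : j = i
    · simp [hj]
    · simpa [hj] using hoff j _ _ hj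
  have hγ : (0 : ℝ) < qb i + 1 := by linarith
  have hβ : (0 : ℝ) < α + qb i + 1 := by linarith
  set t : U × V → ℝ := fun p => (∑' j, q i j p.1 p.2 * W j) - q i i p.1 p.2 * W i with ht
  have tc : Continuous t := hqWc.sub ((hqc i).mul continuous_const)
  obtain ⟨C, hC⟩ := exists_bound t tc
  have hmodsum : ∀ a b, Summable (fun j => if j = i then (0 : ℝ) else q i j a b * W j) := by
    intro a b
    have h1 : Summable (fun j => q i j a b * W j - if j = i then q i i a b * W i else 0) :=
      (hWsum a b).sub (summable_of_ne_finset_zero (s := {i})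
        (fun j hj => by simp only [Finset.mem_singleton] at hj; simp [hj]))
    exact h1.congr fun j => by by_cases hj : j = i <;> simp [hj]
  have ht_eq : ∀ a b, (∑' j, if j = i then (0 : ℝ) else q i j a b * W j) = t (a, b) := by
    intro a b
    have h2 := Summable.tsum_eq_add_tsum_ite (hWsum a b) i
    simp only [ht]
    linarith
  have hdiag : ∀ a b, q i i a b = -∑' j, (if j = i then (0 : ℝ) else q i j a b) := by
    intro a b
    have h2 := Summable.tsum_eq_add_tsum_ite (hsum a b) i
    rw [hcons a b] at h2
    linarith
  have hdiag_le : ∀ a b, q i i a b ≤ 0 := by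
    intro a b
    rw [hdiag a b, neg_nonpos]
    refine tsum_nonneg fun j => ?_
    by_cases hj : j = i
    · simp [hj]
    · simpa [hj] using hoff j a b hj
  have hdiag_ge : ∀ a b, -(qb i) ≤ q i i a b := by
    intro a b
    rw [hdiag a b]
    have h3 := hstable.1 ⟨(a, b), rfl⟩
    simp only at h3
    linarith
  obtain ⟨Cr, hCr⟩ := exists_bound _ hrc
  have main : ∀ (μ : ProbabilityMeasure U) (ν : ProbabilityMeasure V),
      Summable (fun j => qT q i j μ ν * φ j) ∧
      -(qb i) * φ i ≤ ∑' j, qT q i j μ ν * φ j ∧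
      (∑' j, qT q i j μ ν * φ j) ≤ K * C := by
    intro μ ν
    set g' : ℕ → ℝ := fun j => if j = i then 0 else qT q i j μ ν * W j with hg'
    have hqT0 : ∀ j, j ≠ i → 0 ≤ qT q i j μ ν := fun j hj =>
      II_nonneg (fun p => hoff j p.1 p.2 hj) μ ν
    have g'0 : ∀ j, 0 ≤ g' j := by
      intro j
      by_cases hj : j = i
      · simp [hg', hj]
      · simp only [hg', hj, if_false]
        exact mul_nonneg (hqT0 j hj) (hW0 j).le
    have hfun : ∀ j, Continuous (fun p : U × V => if j = i then (0 : ℝ) else q i j p.1 p.2 * W j) := by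
      intro j
      by_cases hj : j = i
      · simp only [hj, if_true]; exact continuous_const
      · simp only [hj, if_false]; exact (hqc j).mul continuous_const
    have hpartial : ∀ F : Finset ℕ, ∑ j ∈ F, g' j ≤ C := by
      intro F
      have e1 : ∑ j ∈ F, g' j =
          II (fun p => ∑ j ∈ F, if j = i then (0 : ℝ) else q i j p.1 p.2 * W j) μ ν := by
        rw [II_finset_sum F _ (fun j _ => hfun j)]
        refine Finset.sum_congr rfl fun j _ => ?_
        by_cases hj : j = i
        · simp [hg', hj, II_const]
        · simp only [hg', hj, if_false]
          rw [qT_eq_II, ← II_mul_const]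
      rw [e1]
      refine II_le_const (continuous_finset_sum _ fun j _ => hfun j) (fun p => ?_) μ ν
      have hsle : ∑ j ∈ F, (if j = i then (0 : ℝ) else q i j p.1 p.2 * W j) ≤
          ∑' j, (if j = i then (0 : ℝ) else q i j p.1 p.2 * W j) := by
        refine Summable.sum_le_tsum F (fun j _ => ?_) (hmodsum p.1 p.2)
        by_cases hj : j = i
        · simp [hj]
        · simp only [hj, if_false]
          exact mul_nonneg (hoff j _ _ hj) (hW0 j).le
      refine le_trans hsle ?_
      rw [ht_eq p.1 p.2]
      exact le_trans (le_abs_self _) (by simpa using hC p)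
    have g'sum : Summable g' := summable_of_sum_range_le g'0 (fun n => hpartial (Finset.range n))
    have g'tsum : ∑' j, g' j ≤ C :=
      Real.tsum_le_of_sum_range_le g'0 (fun n => hpartial (Finset.range n))
    set f1 : ℕ → ℝ := fun j => if j = i then 0 else qT q i j μ ν * φ j with hf1
    have f10 : ∀ j, 0 ≤ f1 j := by
      intro j
      by_cases hj : j = i
      · simp [hf1, hj]
      · simp only [hf1, hj, if_false]
        exact mul_nonneg (hqT0 j hj) (hφ0 j)
    have f1le : ∀ j, f1 j ≤ K * g' j := by
      intro j
      by_cases hj : j = i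
      · simp [hf1, hg', hj]
      · simp only [hf1, hg', hj, if_false]
        calc qT q i j μ ν * φ j ≤ qT q i j μ ν * (K * W j) :=
              mul_le_mul_of_nonneg_left (hφK j) (hqT0 j hj)
          _ = K * (qT q i j μ ν * W j) := by ring
    have f1sum : Summable f1 := Summable.of_nonneg_of_le f10 f1le (g'sum.mul_left K)
    have f1tsum : ∑' j, f1 j ≤ K * C := by
      calc ∑' j, f1 j ≤ ∑' j, K * g' j := Summable.tsum_le_tsum f1le f1sum (g'sum.mul_left K)
        _ = K * ∑' j, g' j := tsum_mul_left
        _ ≤ K * C := mul_le_mul_of_nonneg_left g'tsum hK0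
    have f1tsum0 : 0 ≤ ∑' j, f1 j := tsum_nonneg f10
    have hdec : ∀ j, qT q i j μ ν * φ j = f1 j + (if j = i then qT q i i μ ν * φ i else 0) := by
      intro j
      by_cases hj : j = i <;> simp [hf1, hj]
    have hsingle : Summable (fun j => if j = i then qT q i i μ ν * φ i else 0) :=
      summable_of_ne_finset_zero (s := {i})
        (fun j hj => by simp only [Finset.mem_singleton] at hj; simp [hj])
    have hsummable : Summable (fun j => qT q i j μ ν * φ j) :=
      (f1sum.add hsingle).congr (fun j => (hdec j).symm)
    have htsum_eq : ∑' j, qT q i j μ ν * φ j = (∑' j, f1 j) + qT q i i μ ν * φ i := by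
      rw [tsum_congr hdec, Summable.tsum_add f1sum hsingle, tsum_ite_eq]
    have hqTii_le : qT q i i μ ν ≤ 0 := by
      rw [qT_eq_II]
      exact II_le_const (hqc i) (fun p => hdiag_le p.1 p.2) μ ν
    have hqTii_ge : -(qb i) ≤ qT q i i μ ν := by
      rw [qT_eq_II]
      exact const_le_II (hqc i) (fun p => hdiag_ge p.1 p.2) μ ν
    refine ⟨hsummable, ?_, ?_⟩
    · rw [htsum_eq]
      have h4 : -(qb i) * φ i ≤ qT q i i μ ν * φ i :=
        mul_le_mul_of_nonneg_right hqTii_ge (hφ0 i)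
      linarith
    · rw [htsum_eq]
      have h4 : qT q i i μ ν * φ i ≤ 0 := mul_nonpos_of_nonpos_of_nonneg hqTii_le (hφ0 i)
      linarith
  set G : ProbabilityMeasure U → ProbabilityMeasure V → ℝ :=
    fun μ ν => rT r i μ ν + ∑' j, qT q i j μ ν * φ j with hG
  have hGub : ∀ μ ν, G μ ν ≤ Cr + K * C := by
    intro μ ν
    have h1 : rT r i μ ν ≤ Cr := by
      rw [rT_eq_II]
      exact II_le_const hrc (fun p => le_trans (le_abs_self _) (hCr p)) μ ν
    have := (main μ ν).2.2
    simp only [hG]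
    linarith
  have hGlb : ∀ μ ν, -(qb i) * φ i ≤ G μ ν := by
    intro μ ν
    have h1 : 0 ≤ rT r i μ ν := by
      rw [rT_eq_II]
      exact II_nonneg (fun p => hr0 p.1 p.2) μ ν
    have := (main μ ν).2.1
    simp only [hG]
    linarith
  set gmap : ℝ → ℝ := fun x => (x + (qb i + 1) * φ i) / (α + qb i + 1) with hgm
  have gmono : Monotone gmap := by
    intro x y hxy
    simp only [hgm]
    gcongr
  have gcont : Continuous gmap := by
    simp only [hgm]
    exact (continuous_id.add continuous_const).div_const _
  have hint : ∀ μ ν, rT r i μ ν / (α + qb i + 1) +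
      ((qb i + 1) / (α + qb i + 1)) * ∑' j, pT q qb i j μ ν * φ j = gmap (G μ ν) := by
    intro μ ν
    have hsummable := (main μ ν).1
    have e1 : ∀ j, pT q qb i j μ ν * φ j =
        (qT q i j μ ν * φ j) / (qb i + 1) + (if j = i then φ i else 0) := by
      intro j
      by_cases hj : j = i
      · subst hj
        simp [pT]
        ring
      · simp only [pT, if_neg (Ne.symm hj), if_neg hj, add_zero]
        ring
    have e2 : ∑' j, pT q qb i j μ ν * φ j = (∑' j, qT q i j μ ν * φ j) / (qb i + 1) + φ i := by
      rw [tsum_congr e1, Summable.tsum_add (hsummable.div_const _)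
        (summable_of_ne_finset_zero (s := {i})
          (fun j hj => by simp only [Finset.mem_singleton] at hj; simp [hj])),
        tsum_div_const, tsum_ite_eq]
    rw [e2]
    simp only [hgm, hG]
    field_simp
    ring
  have hSbddA : ∀ μ, BddAbove (Set.range (G μ)) := fun μ =>
    ⟨Cr + K * C, by rintro x ⟨ν, rfl⟩; exact hGub μ ν⟩
  have step1 : ∀ μ, (⨆ ν, gmap (G μ ν)) = gmap (⨆ ν, G μ ν) := fun μ =>
    (gmono.map_ciSup_of_continuousAt gcont.continuousAt (hSbddA μ)).symm
  have hSlb : ∀ μ, -(qb i) * φ i ≤ ⨆ ν, G μ ν := fun μ =>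
    le_trans (hGlb μ (Classical.arbitrary _)) (le_ciSup (hSbddA μ) _)
  have step2 : (⨅ μ, gmap (⨆ ν, G μ ν)) = gmap (⨅ μ, ⨆ ν, G μ ν) :=
    (gmono.map_ciInf_of_continuousAt gcont.continuousAt
      ⟨-(qb i) * φ i, by rintro x ⟨μ, rfl⟩; exact hSlb μ⟩).symm
  calc Iop q r qb α φ i = ⨅ μ, ⨆ ν, gmap (G μ ν) :=
        iInf_congr fun μ => iSup_congr fun ν => hint μ ν
    _ = ⨅ μ, gmap (⨆ ν, G μ ν) := iInf_congr step1
    _ = gmap (⨅ μ, ⨆ ν, G μ ν) := step2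
    _ = (Hop q r φ i + (qb i + 1) * φ i) / (α + qb i + 1) := rfl

end Stmt19Aux


/-- The system (3.1) of dynamic programming inequalities, in terms of `H_α`. -/
def DPI_H {U V : Type} [MeasurableSpace U] [MeasurableSpace V]
    (q : ℕ → ℕ → U → V → ℝ) (r : ℕ → U → V → ℝ) (α : ℝ) (ψ₁ ψ₂ : ℕ → ℝ)
    (φ : ℕ → ℝ) : Prop :=
  (∀ i, ψ₂ i ≤ φ i ∧ φ i ≤ ψ₁ i) ∧
  (∀ i, ψ₂ i < φ i → φ i < ψ₁ i → α * φ i - Hop q r φ i = 0) ∧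
  (∀ i, φ i = ψ₂ i → 0 ≤ α * φ i - Hop q r φ i) ∧
  (∀ i, φ i = ψ₁ i → α * φ i - Hop q r φ i ≤ 0)

theorem qb_nonneg_aux {U V : Type} [Nonempty U] [Nonempty V]
    (q : ℕ → ℕ → U → V → ℝ) (qb : ℕ → ℝ) (hrate : RateHyps q qb) (i : ℕ) :
    0 ≤ qb i := by
  refine le_trans (tsum_nonneg fun j => ?_)
    ((hrate.stable i).1 ⟨(Classical.arbitrary U, Classical.arbitrary V), rfl⟩)
  by_cases hj : j = i
  · simp [hj]
  · simpa [hj] using hrate.off_nonneg i j _ _ hj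

/-- A function `φ ∈ B_W(S)` is a fixed point of `T` iff it satisfies the dynamic
programming inequalities with bilateral constraints (3.1). -/
theorem stmt19 {U V : Type} [MetricSpace U] [CompactSpace U] [Nonempty U]
    [MeasurableSpace U] [BorelSpace U]
    [MetricSpace V] [CompactSpace V] [Nonempty V]
    [MeasurableSpace V] [BorelSpace V]
    (q : ℕ → ℕ → U → V → ℝ) (r : ℕ → U → V → ℝ) (qb : ℕ → ℝ)
    (N : ℕ) (w : ℕ → ℕ → ℝ) (c : ℝ) (W : ℕ → ℝ) (M : ℝ) (α : ℝ) (ψ₁ ψ₂ : ℕ → ℝ)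
    (hrate : RateHyps q qb) (hA1 : A1Hyps q qb N w c W)
    (hA2 : A2Hyps q r W M) (hψ : PsiHyps ψ₁ ψ₂ W M) (hα : 0 < α) :
    ∀ φ ∈ BW W,
      ((∀ i, Tmap q r qb α ψ₁ ψ₂ φ i = φ i) ↔ DPI_H q r α ψ₁ ψ₂ φ) := by
  rintro φ ⟨hφ0, hbdd⟩
  obtain ⟨K, hK⟩ := hbdd
  have hφK : ∀ j, φ j ≤ K * W j := fun j => by
    have h1 : φ j / W j ≤ K := hK ⟨j, rfl⟩
    exact (div_le_iff₀ (hA1.W_pos j)).mp h1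
  have hK0 : 0 ≤ K := le_trans (div_nonneg (hφ0 0) (hA1.W_pos 0).le) (hK ⟨0, rfl⟩)
  have hWsum : ∀ i a b, Summable fun j => q i j a b * W j := by
    intro i a b
    have h1 : (fun j => q i j a b * W j) =
        fun j => ∑ n ∈ Finset.range N, q i j a b * w n j := by
      funext j; rw [hA1.W_def j, Finset.mul_sum]
    rw [h1]
    exact summable_sum fun n hn => hA1.w_summable n (Finset.mem_range.mp hn) i a b
  have hkey : ∀ i, Iop q r qb α φ i =
      (Hop q r φ i + (qb i + 1) * φ i) / (α + qb i + 1) := fun i =>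
    Stmt19Aux.key_identity q r qb W φ α K i
      (fun j a b hj => hrate.off_nonneg i j a b hj) (hrate.summable i)
      (hrate.conservative i) (hrate.stable i) (hWsum i)
      (fun j => hA2.q_cont i j) (hA2.qW_cont i) (hA2.r_cont i)
      (hA2.r_nonneg i) hφ0 hφK hK0 hA1.W_pos hα
  have hβ : ∀ i, (0 : ℝ) < α + qb i + 1 := fun i => by
    have := qb_nonneg_aux q qb hrate i; linarith
  have h1 : ∀ i, (Iop q r qb α φ i ≤ φ i ↔ 0 ≤ α * φ i - Hop q r φ i) := by
    intro i
    rw [hkey i, div_le_iff₀ (hβ i)]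
    constructor <;> intro h <;> nlinarith
  have h2 : ∀ i, (φ i ≤ Iop q r qb α φ i ↔ α * φ i - Hop q r φ i ≤ 0) := by
    intro i
    rw [hkey i, le_div_iff₀ (hβ i)]
    constructor <;> intro h <;> nlinarith
  constructor
  · intro hT
    refine ⟨fun i => ?_, fun i hl hr => ?_, fun i hEq => ?_, fun i hEq => ?_⟩
    · constructor
      · rw [← hT i]
        exact le_min (le_max_right _ _) (hψ.ψ₂_lt_ψ₁ i).le
      · rw [← hT i]
        exact min_le_right _ _
    · -- interior
      have Ti := hT i
      unfold Tmap at Ti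
      have hmax : max (Iop q r qb α φ i) (ψ₂ i) = φ i := by
        rcases le_or_gt (max (Iop q r qb α φ i) (ψ₂ i)) (ψ₁ i) with h | h
        · rwa [min_eq_left h] at Ti
        · rw [min_eq_right h.le] at Ti
          linarith
      have hI : Iop q r qb α φ i = φ i := by
        rcases le_total (Iop q r qb α φ i) (ψ₂ i) with h | h
        · rw [max_eq_right h] at hmax; linarith
        · rwa [max_eq_left h] at hmax
      have ha := (h1 i).mp hI.le
      have hb := (h2 i).mp hI.ge
      linarith
    · -- φ = ψ₂
      have Ti := hT i
      unfold Tmap at Ti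
      have hr : φ i < ψ₁ i := hEq ▸ hψ.ψ₂_lt_ψ₁ i
      have hmax : max (Iop q r qb α φ i) (ψ₂ i) = φ i := by
        rcases le_or_gt (max (Iop q r qb α φ i) (ψ₂ i)) (ψ₁ i) with h | h
        · rwa [min_eq_left h] at Ti
        · rw [min_eq_right h.le] at Ti
          linarith
      have hI : Iop q r qb α φ i ≤ φ i := hmax ▸ le_max_left _ _
      exact (h1 i).mp hI
    · -- φ = ψ₁
      have Ti := hT i
      unfold Tmap at Ti
      rw [hEq] at Ti
      have hX : ψ₁ i ≤ max (Iop q r qb α φ i) (ψ₂ i) := by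
        rcases le_or_gt (max (Iop q r qb α φ i) (ψ₂ i)) (ψ₁ i) with h | h
        · rw [min_eq_left h] at Ti
          exact Ti.ge
        · exact h.le
      have hI : ψ₁ i ≤ Iop q r qb α φ i := by
        rcases le_total (Iop q r qb α φ i) (ψ₂ i) with h | h
        · rw [max_eq_right h] at hX
          exact absurd hX (not_le.mpr (hψ.ψ₂_lt_ψ₁ i))
        · rwa [max_eq_left h] at hX
      exact (h2 i).mp (by rw [hEq]; exact hI)
  · rintro ⟨hbd, heq, hlo, hhi⟩ i
    unfold Tmap
    rcases eq_or_lt_of_le (hbd i).2 with hr | hr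
    · -- φ i = ψ₁ i
      have hI : ψ₁ i ≤ Iop q r qb α φ i := hr ▸ (h2 i).mpr (by linarith [hhi i hr])
      rw [min_eq_right (le_trans hI (le_max_left _ _)), ← hr]
    · rcases eq_or_lt_of_le (hbd i).1 with hl | hl
      · -- ψ₂ i = φ i
        have hI : Iop q r qb α φ i ≤ ψ₂ i := hl ▸ (h1 i).mpr (hlo i hl.symm)
        rw [max_eq_right hI, min_eq_left (hψ.ψ₂_lt_ψ₁ i).le, hl]
      · -- interior
        have h0 := heq i hl hr
        have hIa : Iop q r qb α φ i ≤ φ i := (h1 i).mpr (by linarith)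
        have hIb : φ i ≤ Iop q r qb α φ i := (h2 i).mpr (by linarith)
        have hI : Iop q r qb α φ i = φ i := le_antisymm hIa hIb
        rw [hI, max_eq_left hl.le, min_eq_left hr.le]
end
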